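/- Let C be an n×n real symmetric positive-definite matrix, let s be an integer with 1 ≤ s ≤ n−1, and fix α ∈ [0,1]. Then the function (ψ₁,ψ₂) ↦ v̌(C,s;α,e^{ψ₁},e^{ψ₂}) is jointly convex on ℝ². -/

import Mathlib

open Matrix

/-- `memP n t x X` says `(x,X) ∈ P(n,t)` (and `Q(n,n-s)` is `memP n (n-s)`). -/
def memP (n : ℕ) (t : ℝ) (x : Fin n → ℝ) (X : Matrix (Fin n) (Fin n) ℝ) : Prop :=
  X.IsSymm ∧ (X - vecMulVec x x).PosSemidef ∧ (∀ i, X i i = x i) ∧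
    (∑ i, x i) = t ∧ X *ᵥ (fun _ => (1 : ℝ)) = t • x

/-- The mBQP objective `g_{α,γ₁,γ₂}(x,X,y,Y)`. -/
noncomputable def gobj (n : ℕ) (C : Matrix (Fin n) (Fin n) ℝ) (s : ℕ)
    (α γ₁ γ₂ : ℝ) (x : Fin n → ℝ) (X : Matrix (Fin n) (Fin n) ℝ)
    (y : Fin n → ℝ) (Y : Matrix (Fin n) (Fin n) ℝ) : ℝ :=
  (1 - α) * (Real.log (γ₁ • (C.hadamard X) + 1 - Matrix.diagonal x).det
      - s * Real.log γ₁)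
  + α * (Real.log (γ₂ • ((C⁻¹).hadamard Y) + 1 - Matrix.diagonal y).det
      - ((n : ℝ) - s) * Real.log γ₂ + Real.log C.det)

/-- The mBQP bound `v(C,s;α,γ₁,γ₂)`. -/
noncomputable def vmix (n : ℕ) (C : Matrix (Fin n) (Fin n) ℝ) (s : ℕ)
    (α γ₁ γ₂ : ℝ) : ℝ :=
  sSup {r : ℝ | ∃ x X y Y, memP n (s : ℝ) x X ∧ memP n ((n : ℝ) - s) y Y ∧
    x + y = (fun _ => (1 : ℝ)) ∧ r = gobj n C s α γ₁ γ₂ x X y Y}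

/-- The strengthened mBQP bound `v̌(C,s;α,γ₁,γ₂)`, obtained by substituting
`y = e - x` and `Y = X + eeᵀ - exᵀ - xeᵀ`. -/
noncomputable def vcheck (n : ℕ) (C : Matrix (Fin n) (Fin n) ℝ) (s : ℕ)
    (α γ₁ γ₂ : ℝ) : ℝ :=
  sSup {r : ℝ | ∃ x X, memP n (s : ℝ) x X ∧
    r = gobj n C s α γ₁ γ₂ x X ((fun _ => (1 : ℝ)) - x)
      (X + vecMulVec (fun _ => (1 : ℝ)) (fun _ => (1 : ℝ))
        - vecMulVec (fun _ => (1 : ℝ)) x - vecMulVec x (fun _ => (1 : ℝ)))}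


set_option linter.unusedSectionVars false
set_option maxHeartbeats 1000000

open Kronecker

section Helpers

variable {m : Type*} [Fintype m] [DecidableEq m]

private lemma dp_nonneg {M : Matrix m m ℝ} (hM : M.PosSemidef) (v : m → ℝ) :
    0 ≤ v ⬝ᵥ M *ᵥ v := by simpa using hM.dotProduct_mulVec_nonneg v

private lemma dp_single {M : Matrix m m ℝ} (i j : m) :
    Pi.single i (1:ℝ) ⬝ᵥ (M *ᵥ Pi.single j 1) = M i j := by
  simp [dotProduct, mulVec, Pi.single_apply, Finset.mul_sum]

private lemma psd_vecMulVec (v : m → ℝ) : (vecMulVec v v).PosSemidef := by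
  rw [vecMulVec_eq Unit]
  have h : (replicateCol Unit v)ᴴ = replicateRow Unit v := by
    ext i j; simp [replicateCol, replicateRow]
  rw [← h]
  exact posSemidef_self_mul_conjTranspose _

private lemma psd_diag_nonneg {M : Matrix m m ℝ} (hM : M.PosSemidef) (i : m) : 0 ≤ M i i := by
  have := dp_nonneg hM (Pi.single i 1)
  rwa [dp_single] at this

private lemma symm_entry {M : Matrix m m ℝ} (hM : M.PosSemidef) (i j : m) : M j i = M i j := by
  have := hM.1
  have h2 := congrFun (congrFun this i) j
  simpa [conjTranspose_apply] using h2

private lemma psd_entry_abs_le {M : Matrix m m ℝ} (hM : M.PosSemidef) (i j : m) :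
    |M i j| ≤ (M i i + M j j) / 2 := by
  rcases eq_or_ne i j with rfl | hij
  · rw [abs_of_nonneg (psd_diag_nonneg hM i)]; linarith
  · have hplus := dp_nonneg hM (Pi.single i 1 + Pi.single j 1)
    have hminus := dp_nonneg hM (Pi.single i 1 - Pi.single j 1)
    have e1 : ∀ v w : m → ℝ, (v + w) ⬝ᵥ M *ᵥ (v + w)
        = v ⬝ᵥ M *ᵥ v + v ⬝ᵥ M *ᵥ w + (w ⬝ᵥ M *ᵥ v + w ⬝ᵥ M *ᵥ w) := by
      intro v w; rw [mulVec_add, dotProduct_add, add_dotProduct, add_dotProduct]; ring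
    have e2 : ∀ v w : m → ℝ, (v - w) ⬝ᵥ M *ᵥ (v - w)
        = v ⬝ᵥ M *ᵥ v - v ⬝ᵥ M *ᵥ w - (w ⬝ᵥ M *ᵥ v - w ⬝ᵥ M *ᵥ w) := by
      intro v w; rw [mulVec_sub, dotProduct_sub, sub_dotProduct, sub_dotProduct]; ring
    rw [e1] at hplus; rw [e2] at hminus
    rw [dp_single, dp_single, dp_single, dp_single] at hplus hminus
    rw [symm_entry hM i j] at hplus hminus
    rw [abs_le]; constructor <;> nlinarith

private lemma psd_kronecker {A B : Matrix m m ℝ} (hA : A.PosSemidef) (hB : B.PosSemidef) :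
    (A ⊗ₖ B).PosSemidef := by
  exact hA.kronecker hB

private lemma psd_hadamard {A B : Matrix m m ℝ} (hA : A.PosSemidef) (hB : B.PosSemidef) :
    (A.hadamard B).PosSemidef := by
  have h : A.hadamard B = (A ⊗ₖ B).submatrix (fun i => (i, i)) (fun i => (i, i)) := by
    ext i j
    simp [hadamard_apply, submatrix_apply]
  rw [h]
  exact (psd_kronecker hA hB).submatrix _

private lemma convexOn_log_linexp {a b : ℝ} (ha : 0 ≤ a) (hb : 0 ≤ b) :
    ConvexOn ℝ Set.univ fun ψ : ℝ => Real.log (a * Real.exp ψ + b) := by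
  rcases eq_or_lt_of_le ha with rfl | ha'
  · simpa using convexOn_const (Real.log b) convex_univ
  rcases eq_or_lt_of_le hb with rfl | hb'
  · refine ⟨convex_univ, fun p _ q _ u v hu hv huv => le_of_eq ?_⟩
    simp only [smul_eq_mul, add_zero,
      Real.log_mul (ne_of_gt ha') (Real.exp_ne_zero _), Real.log_exp]
    linear_combination (Real.log a) * huv.symm
  · refine ⟨convex_univ, fun p _ q _ u v hu hv huv => ?_⟩
    rcases eq_or_lt_of_le hu with rfl | hu'
    · simp only [zero_add] at huv; simp [huv]
    rcases eq_or_lt_of_le hv with rfl | hv'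
    · simp only [add_zero] at huv; simp [huv]
    set x1 := a * Real.exp p with hx1def
    set x2 := a * Real.exp q with hx2def
    have hx1 : 0 < x1 := by positivity
    have hx2 : 0 < x2 := by positivity
    set A := x1 + b with hAdef
    set B := x2 + b with hBdef
    have hA : 0 < A := by positivity
    have hB : 0 < B := by positivity
    have hK : 0 < A ^ u * B ^ v := by positivity
    have hexp : a * Real.exp (u * p + v * q) = x1 ^ u * x2 ^ v := by
      rw [hx1def, hx2def, Real.mul_rpow ha (Real.exp_pos p).le,
        Real.mul_rpow ha (Real.exp_pos q).le,
        Real.rpow_def_of_pos ha', Real.rpow_def_of_pos ha',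
        Real.rpow_def_of_pos (Real.exp_pos p), Real.rpow_def_of_pos (Real.exp_pos q),
        Real.log_exp, Real.log_exp, ← Real.exp_add, ← Real.exp_add, ← Real.exp_add,
        ← Real.exp_log ha', ← Real.exp_add]
      congr 1
      simp only [Real.log_exp]
      linear_combination (Real.log a) * huv.symm
    have hbb : b = b ^ u * b ^ v := by
      rw [← Real.rpow_add hb', huv, Real.rpow_one]
    have g1 : (x1 / A) ^ u * (x2 / B) ^ v ≤ u * (x1 / A) + v * (x2 / B) :=
      Real.geom_mean_le_arith_mean2_weighted hu hv (by positivity) (by positivity) huv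
    have g2 : (b / A) ^ u * (b / B) ^ v ≤ u * (b / A) + v * (b / B) :=
      Real.geom_mean_le_arith_mean2_weighted hu hv (by positivity) (by positivity) huv
    have hsum : (x1 / A) ^ u * (x2 / B) ^ v + (b / A) ^ u * (b / B) ^ v ≤ 1 := by
      have e : u * (x1 / A) + v * (x2 / B) + (u * (b / A) + v * (b / B)) = 1 := by
        field_simp
        rw [hAdef, hBdef]
        linear_combination ((x1 + b) * (x2 + b)) * huv
      linarith
    have e1 : x1 ^ u * x2 ^ v = ((x1 / A) ^ u * (x2 / B) ^ v) * (A ^ u * B ^ v) := by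
      rw [Real.div_rpow hx1.le hA.le, Real.div_rpow hx2.le hB.le]
      field_simp
    have e2 : b ^ u * b ^ v = ((b / A) ^ u * (b / B) ^ v) * (A ^ u * B ^ v) := by
      rw [Real.div_rpow hb'.le hA.le, Real.div_rpow hb'.le hB.le]
      field_simp
    have key : a * Real.exp (u * p + v * q) + b ≤ A ^ u * B ^ v := by
      rw [hexp]
      conv_lhs => rw [hbb]
      rw [e1, e2, ← add_mul]
      exact mul_le_of_le_one_left hK.le hsum
    calc Real.log (a * Real.exp (u • p + v • q) + b)
        ≤ Real.log (A ^ u * B ^ v) := by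
          apply Real.log_le_log (by positivity)
          simpa [smul_eq_mul] using key
      _ = u * Real.log A + v * Real.log B := by
          rw [Real.log_mul (by positivity) (by positivity), Real.log_rpow hA, Real.log_rpow hB]
      _ = u • Real.log (a * Real.exp p + b) + v • Real.log (a * Real.exp q + b) := by
          simp [smul_eq_mul, hAdef, hBdef, hx1def, hx2def]

private lemma eig_le_one {A : Matrix m m ℝ} (hA : A.PosSemidef)
    (h1 : ((1 : Matrix m m ℝ) - A).PosSemidef) (i : m) : hA.1.eigenvalues i ≤ 1 := by
  set v : m → ℝ := ⇑(hA.1.eigenvectorBasis i) with hv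
  have hvv : v ⬝ᵥ v = 1 := by
    have hnorm := hA.1.eigenvectorBasis.orthonormal.1 i
    have h : (inner ℝ (hA.1.eigenvectorBasis i) (hA.1.eigenvectorBasis i) : ℝ) = 1 := by
      rw [real_inner_self_eq_norm_sq, hnorm]; norm_num
    rw [EuclideanSpace.inner_eq_star_dotProduct] at h
    simpa [dotProduct, mul_comm] using h
  have hAv : A *ᵥ v = hA.1.eigenvalues i • v := hA.1.mulVec_eigenvectorBasis i
  have h := dp_nonneg h1 v
  rw [sub_mulVec, dotProduct_sub, one_mulVec, hAv, dotProduct_smul, smul_eq_mul, hvv] at h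
  linarith

open scoped MatrixOrder in
private lemma det_factor {M N : Matrix m m ℝ} (hM : M.PosSemidef) (hN : N.PosSemidef)
    (hT : (M + N).PosDef) :
    ∃ (d : m → ℝ), (∀ i, 0 ≤ d i) ∧ (∀ i, d i ≤ 1) ∧
      ∀ c : ℝ, (c • M + N).det = (M + N).det * ∏ i, (d i * c + (1 - d i)) := by
  set T := M + N with hTdef
  have hTsd : T.PosSemidef := hT.posSemidef
  set R := CFC.sqrt T with hRdef
  have hRpsd : R.PosSemidef := Matrix.nonneg_iff_posSemidef.mp (CFC.sqrt_nonneg T)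
  have hRR : R * R = T := CFC.sqrt_mul_sqrt_self T hTsd.nonneg
  have hdetR : IsUnit R.det := by
    have h : R.det * R.det = T.det := by rw [← det_mul, hRR]
    have := hT.det_pos
    apply isUnit_iff_ne_zero.mpr
    intro h0; rw [h0, mul_zero] at h; linarith
  set P := R⁻¹ with hPdef
  have hPR : P * R = 1 := nonsing_inv_mul _ hdetR
  have hRP : R * P = 1 := mul_nonsing_inv _ hdetR
  have hPherm : P.IsHermitian := hRpsd.1.inv
  set M' := P * M * P with hM'def
  have hM' : M'.PosSemidef := by
    have := hM.mul_mul_conjTranspose_same P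
    rwa [hPherm.eq] at this
  set N' := P * N * P with hN'def
  have hN' : N'.PosSemidef := by
    have := hN.mul_mul_conjTranspose_same P
    rwa [hPherm.eq] at this
  have hsum : M' + N' = 1 := by
    rw [hM'def, hN'def, ← Matrix.add_mul, ← Matrix.mul_add, ← hTdef, ← hRR,
      ← Matrix.mul_assoc P R R, hPR, Matrix.one_mul, hRP]
  have hN'eq : N' = 1 - M' := by rw [← hsum, add_sub_cancel_left]
  set d := hM'.1.eigenvalues with hddef
  refine ⟨d, hM'.eigenvalues_nonneg, eig_le_one hM' (hN'eq ▸ hN'), fun c => ?_⟩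
  have hRMR : R * M' * R = M := by
    rw [hM'def, ← Matrix.mul_assoc, ← Matrix.mul_assoc, hRP, Matrix.one_mul,
      Matrix.mul_assoc, hPR, Matrix.mul_one]
  have hRNR : R * N' * R = N := by
    rw [hN'def, ← Matrix.mul_assoc, ← Matrix.mul_assoc, hRP, Matrix.one_mul,
      Matrix.mul_assoc, hPR, Matrix.mul_one]
  have key : c • M + N = R * (c • M' + N') * R := by
    rw [Matrix.mul_add, Matrix.add_mul, Matrix.mul_smul, Matrix.smul_mul, hRMR, hRNR]
  rw [key, det_mul, det_mul]
  have hdet2 : R.det * R.det = T.det := by rw [← det_mul, hRR]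
  set U : Matrix m m ℝ := (hM'.1.eigenvectorUnitary : Matrix m m ℝ) with hUdef
  have hUU : U * star U = 1 := Matrix.mem_unitaryGroup_iff.mp hM'.1.eigenvectorUnitary.2
  have hspec : M' = U * diagonal d * star U := by
    have := hM'.1.spectral_theorem
    simpa using this
  have hinner : c • M' + N' = U * diagonal (fun i => d i * c + (1 - d i)) * star U := by
    rw [hN'eq, hspec]
    have h1 : (1 : Matrix m m ℝ) = U * 1 * star U := by rw [Matrix.mul_one, hUU]
    rw [show (diagonal (fun i => d i * c + (1 - d i)) : Matrix m m ℝ)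
        = c • diagonal d + (1 - diagonal d) from by
      ext i j
      by_cases hij : i = j
      · subst hij
        simp [Matrix.smul_apply, Matrix.sub_apply, Matrix.add_apply, diagonal_apply,
          one_apply]
        ring
      · simp [Matrix.smul_apply, Matrix.sub_apply, Matrix.add_apply, diagonal_apply, hij,
          one_apply]]
    conv_lhs => rw [h1]
    rw [Matrix.mul_add, Matrix.add_mul, Matrix.mul_sub, Matrix.sub_mul,
      Matrix.mul_smul, Matrix.smul_mul]
  rw [hinner, det_mul, det_mul, det_diagonal]
  have hdetU : U.det * (star U).det = 1 := by rw [← det_mul, hUU, det_one]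
  linear_combination (∏ i, (d i * c + (1 - d i))) * R.det * R.det * hdetU
    + (∏ i, (d i * c + (1 - d i))) * hdet2

private lemma convexOn_logdet {M N : Matrix m m ℝ} (hM : M.PosSemidef) (hN : N.PosSemidef) :
    ConvexOn ℝ Set.univ fun ψ : ℝ => Real.log (Real.exp ψ • M + N).det := by
  by_cases hT : (M + N).PosDef
  · obtain ⟨d, hd0, hd1, hdet⟩ := det_factor hM hN hT
    have heq : (fun ψ : ℝ => Real.log (Real.exp ψ • M + N).det)
        = fun ψ : ℝ => Real.log (M + N).det + ∑ i, Real.log (d i * Real.exp ψ + (1 - d i)) := by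
      funext ψ
      have hpos : ∀ i ∈ Finset.univ, d i * Real.exp ψ + (1 - d i) ≠ 0 := by
        intro i _
        rcases eq_or_lt_of_le (hd0 i) with h | h
        · rw [← h]; norm_num
        · nlinarith [mul_pos h (Real.exp_pos ψ), hd1 i]
      rw [hdet (Real.exp ψ), Real.log_mul (ne_of_gt hT.det_pos) (Finset.prod_ne_zero_iff.mpr hpos),
        Real.log_prod hpos]
    rw [heq]
    have hsumconv : ∀ s : Finset m, ConvexOn ℝ Set.univ fun ψ : ℝ =>
        ∑ i ∈ s, Real.log (d i * Real.exp ψ + (1 - d i)) := by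
      intro s
      induction s using Finset.induction_on with
      | empty => simpa using convexOn_const (0 : ℝ) convex_univ
      | @insert a s ha ih =>
        have h1 : ConvexOn ℝ Set.univ fun ψ : ℝ =>
            Real.log (d a * Real.exp ψ + (1 - d a)) :=
          convexOn_log_linexp (hd0 a) (by linarith [hd1 a])
        simpa only [Finset.sum_insert ha, Pi.add_def] using h1.add ih
    exact (convexOn_const _ convex_univ).add (hsumconv Finset.univ)
  · have hTsd : (M + N).PosSemidef := hM.add hN
    have hdeg : ∃ v ≠ (0 : m → ℝ), (M + N) *ᵥ v = 0 := by
      rw [posDef_iff_dotProduct_mulVec] at hT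
      push_neg at hT
      obtain ⟨v, hv0, hv⟩ := hT hTsd.1
      refine ⟨v, hv0, ?_⟩
      rw [← hTsd.dotProduct_mulVec_zero_iff]
      exact le_antisymm (by simpa using hv) (hTsd.dotProduct_mulVec_nonneg v)
    obtain ⟨v, hv0, hv⟩ := hdeg
    have hMv : M *ᵥ v = 0 := by
      rw [← hM.dotProduct_mulVec_zero_iff]
      have h1 : star v ⬝ᵥ M *ᵥ v + star v ⬝ᵥ N *ᵥ v = 0 := by
        rw [← dotProduct_add, ← add_mulVec, hv, dotProduct_zero]
      have h2 := hM.dotProduct_mulVec_nonneg v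
      have h3 := hN.dotProduct_mulVec_nonneg v
      linarith
    have hNv : N *ᵥ v = 0 := by
      rw [← hN.dotProduct_mulVec_zero_iff]
      have h1 : star v ⬝ᵥ M *ᵥ v + star v ⬝ᵥ N *ᵥ v = 0 := by
        rw [← dotProduct_add, ← add_mulVec, hv, dotProduct_zero]
      have h2 := hM.dotProduct_mulVec_nonneg v
      have h3 := hN.dotProduct_mulVec_nonneg v
      linarith
    have hzero : ∀ ψ : ℝ, (Real.exp ψ • M + N).det = 0 := by
      intro ψ
      rw [← Matrix.exists_mulVec_eq_zero_iff]
      refine ⟨v, hv0, ?_⟩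
      rw [add_mulVec, smul_mulVec, hMv, hNv, smul_zero, add_zero]
    simp only [hzero, Real.log_zero]
    exact convexOn_const _ convex_univ

private lemma logdet_le {n : ℕ} {M : Matrix (Fin n) (Fin n) ℝ} {K : ℝ} (hK0 : 0 ≤ K)
    (hK : ∀ i j, |M i j| ≤ K) :
    Real.log M.det ≤ Real.log ((n.factorial : ℝ) * K ^ n + 1) := by
  have habs : |M.det| ≤ (n.factorial : ℝ) * K ^ n := by
    have := Matrix.det_le (A := M) (abv := (AbsoluteValue.abs : AbsoluteValue ℝ ℝ)) (x := K)
      (fun i j => hK i j)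
    simpa [Fintype.card_fin, nsmul_eq_mul] using this
  have hKn : (0:ℝ) ≤ (n.factorial : ℝ) * K ^ n := by positivity
  have hb1 : (1:ℝ) ≤ (n.factorial : ℝ) * K ^ n + 1 := by linarith
  rw [← Real.log_abs]
  rcases eq_or_lt_of_le (abs_nonneg M.det) with h | h
  · rw [← h, Real.log_zero]
    exact Real.log_nonneg hb1
  · exact Real.log_le_log h (by linarith)

end Helpers

section App

private lemma matN_rw {n : ℕ} (c : ℝ) (M : Matrix (Fin n) (Fin n) ℝ) (z : Fin n → ℝ) :
    c • M + 1 - Matrix.diagonal z = c • M + Matrix.diagonal (fun i => 1 - z i) := by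
  ext i j
  by_cases hij : i = j
  · subst hij
    simp [Matrix.add_apply, Matrix.sub_apply, Matrix.one_apply, Matrix.diagonal_apply]
    ring
  · simp [Matrix.add_apply, Matrix.sub_apply, Matrix.one_apply, Matrix.diagonal_apply, hij]

private lemma gconv {n s : ℕ} {C : Matrix (Fin n) (Fin n) ℝ} {α : ℝ} (hα0 : 0 ≤ α) (hα1 : α ≤ 1)
    {x y : Fin n → ℝ} {X Y : Matrix (Fin n) (Fin n) ℝ}
    (hM1 : (C.hadamard X).PosSemidef) (hx : ∀ i, x i ≤ 1)
    (hM2 : ((C⁻¹).hadamard Y).PosSemidef) (hy : ∀ i, y i ≤ 1) :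
    ConvexOn ℝ Set.univ
      fun ψ : ℝ × ℝ => gobj n C s α (Real.exp ψ.1) (Real.exp ψ.2) x X y Y := by
  have hN1 : (Matrix.diagonal (fun i => 1 - x i) : Matrix (Fin n) (Fin n) ℝ).PosSemidef :=
    posSemidef_diagonal_iff.mpr fun i => by linarith [hx i]
  have hN2 : (Matrix.diagonal (fun i => 1 - y i) : Matrix (Fin n) (Fin n) ℝ).PosSemidef :=
    posSemidef_diagonal_iff.mpr fun i => by linarith [hy i]
  have F1 := convexOn_logdet hM1 hN1
  have F2 := convexOn_logdet hM2 hN2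
  refine ⟨convex_univ, fun p _ q _ u v hu hv huv => ?_⟩
  have h1 := F1.2 (Set.mem_univ p.1) (Set.mem_univ q.1) hu hv huv
  have h2 := F2.2 (Set.mem_univ p.2) (Set.mem_univ q.2) hu hv huv
  simp only [smul_eq_mul] at h1 h2
  simp only [gobj, matN_rw, Real.log_exp, smul_eq_mul, Prod.fst_add, Prod.snd_add,
    Prod.smul_fst, Prod.smul_snd, Real.log_exp]
  have key1 := mul_le_mul_of_nonneg_left h1 (by linarith : (0:ℝ) ≤ 1 - α)
  have key2 := mul_le_mul_of_nonneg_left h2 hα0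
  have h3 : u * (α * Real.log C.det) + v * (α * Real.log C.det) = α * Real.log C.det := by
    rw [← add_mul, huv, one_mul]
  nlinarith [key1, key2, h3]

private lemma memP_props {n : ℕ} {t : ℝ} {x : Fin n → ℝ} {X Y : Matrix (Fin n) (Fin n) ℝ}
    (h : memP n t x X)
    (hYdef : Y = X + vecMulVec (fun _ => (1:ℝ)) (fun _ => (1:ℝ))
        - vecMulVec (fun _ => (1:ℝ)) x - vecMulVec x (fun _ => (1:ℝ))) :
    X.PosSemidef ∧ (∀ i, 0 ≤ x i) ∧ (∀ i, x i ≤ 1) ∧ (∀ i j, |X i j| ≤ 1) ∧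
      Y.PosSemidef ∧ (∀ i j, |Y i j| ≤ 4) := by
  subst hYdef
  obtain ⟨hsymm, hsub, hdiag, hsum, hrow⟩ := h
  have key : ∀ i, 0 ≤ x i - x i * x i := by
    intro i
    have := psd_diag_nonneg hsub i
    simpa [Matrix.sub_apply, vecMulVec_apply, hdiag i] using this
  have hx0 : ∀ i, 0 ≤ x i := fun i => by nlinarith [key i]
  have hx1 : ∀ i, x i ≤ 1 := fun i => by nlinarith [key i]
  have hX : X.PosSemidef := by
    have hXeq : X = (X - vecMulVec x x) + vecMulVec x x := by rw [sub_add_cancel]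
    rw [hXeq]; exact hsub.add (psd_vecMulVec x)
  have hXb : ∀ i j, |X i j| ≤ 1 := by
    intro i j
    have := psd_entry_abs_le hX i j
    rw [hdiag i, hdiag j] at this
    have h1 := hx1 i; have h2 := hx1 j
    linarith
  have hYeq : X + vecMulVec (fun _ => (1:ℝ)) (fun _ => (1:ℝ)) - vecMulVec (fun _ => (1:ℝ)) x
        - vecMulVec x (fun _ => (1:ℝ))
      = (X - vecMulVec x x)
        + vecMulVec ((fun _ => (1:ℝ)) - x) ((fun _ => (1:ℝ)) - x) := by
    ext i j
    simp only [Matrix.add_apply, Matrix.sub_apply, vecMulVec_apply, Pi.sub_apply]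
    ring
  have hY : (X + vecMulVec (fun _ => (1:ℝ)) (fun _ => (1:ℝ)) - vecMulVec (fun _ => (1:ℝ)) x
      - vecMulVec x (fun _ => (1:ℝ))).PosSemidef := by
    rw [hYeq]; exact hsub.add (psd_vecMulVec _)
  refine ⟨hX, hx0, hx1, hXb, hY, ?_⟩
  intro i j
  simp only [Matrix.add_apply, Matrix.sub_apply, vecMulVec_apply]
  have h1 := hXb i j
  have := hx0 i; have := hx0 j; have := hx1 i; have := hx1 j
  rw [abs_le] at h1 ⊢
  constructor <;> [nlinarith [h1.1]; nlinarith [h1.2]]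

private lemma memP_witness {n s : ℕ} (hsn : s ≤ n) :
    memP n (s:ℝ) (fun i => if (i:ℕ) < s then 1 else 0)
      (vecMulVec (fun i => if (i:ℕ) < s then 1 else 0)
        (fun i => if (i:ℕ) < s then 1 else 0)) := by
  set x : Fin n → ℝ := fun i => if (i:ℕ) < s then 1 else 0 with hx
  have hsum : (∑ i, x i) = (s:ℝ) := by
    rw [hx]
    rw [Fin.sum_univ_eq_sum_range (fun i => if i < s then (1:ℝ) else 0) n]
    have h : ∀ i, (if i < s then (1:ℝ) else 0) = if i ∈ Finset.range s then (1:ℝ) else 0 := by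
      intro i; simp [Finset.mem_range]
    simp_rw [h]
    rw [Finset.sum_ite_mem, Finset.inter_eq_right.mpr (Finset.range_subset_range.mpr hsn)]
    simp
  refine ⟨?_, ?_, ?_, hsum, ?_⟩
  · ext i j
    simp [Matrix.transpose_apply, vecMulVec_apply, mul_comm]
  · rw [sub_self]; exact Matrix.PosSemidef.zero
  · intro i
    by_cases h : (i:ℕ) < s <;> simp [vecMulVec_apply, hx, h]
  · funext i
    simp only [mulVec, dotProduct, vecMulVec_apply, mul_one, Pi.smul_apply, smul_eq_mul]
    rw [← Finset.mul_sum, hsum, mul_comm]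

private lemma gobj_le {n s : ℕ} {C : Matrix (Fin n) (Fin n) ℝ} {α : ℝ}
    (hα0 : 0 ≤ α) (hα1 : α ≤ 1)
    {x y : Fin n → ℝ} {X Y : Matrix (Fin n) (Fin n) ℝ}
    (hXb : ∀ i j, |X i j| ≤ 1) (hx0 : ∀ i, 0 ≤ x i) (hx1 : ∀ i, x i ≤ 1)
    (hYb : ∀ i j, |Y i j| ≤ 4) (hy0 : ∀ i, 0 ≤ y i) (hy1 : ∀ i, y i ≤ 1)
    (ψ : ℝ × ℝ) :
    gobj n C s α (Real.exp ψ.1) (Real.exp ψ.2) x X y Y ≤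
      (1 - α) * (Real.log ((n.factorial : ℝ)
          * (Real.exp ψ.1 * (∑ i, ∑ j, |C i j|) + 2) ^ n + 1) - s * ψ.1)
      + α * (Real.log ((n.factorial : ℝ)
          * (Real.exp ψ.2 * (4 * ∑ i, ∑ j, |C⁻¹ i j|) + 2) ^ n + 1)
          - ((n : ℝ) - s) * ψ.2 + Real.log C.det) := by
  set c1 := ∑ i, ∑ j, |C i j| with hc1def
  set c2 := ∑ i, ∑ j, |C⁻¹ i j| with hc2def
  have hc1 : ∀ i j, |C i j| ≤ c1 := by
    intro i j
    calc |C i j| ≤ ∑ j', |C i j'| :=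
          Finset.single_le_sum (f := fun j' => |C i j'|) (fun _ _ => abs_nonneg _)
            (Finset.mem_univ j)
      _ ≤ c1 := Finset.single_le_sum (f := fun i' => ∑ j', |C i' j'|)
          (fun _ _ => Finset.sum_nonneg fun _ _ => abs_nonneg _) (Finset.mem_univ i)
  have hc2 : ∀ i j, |C⁻¹ i j| ≤ c2 := by
    intro i j
    calc |C⁻¹ i j| ≤ ∑ j', |C⁻¹ i j'| :=
          Finset.single_le_sum (f := fun j' => |C⁻¹ i j'|) (fun _ _ => abs_nonneg _)
            (Finset.mem_univ j)
      _ ≤ c2 := Finset.single_le_sum (f := fun i' => ∑ j', |C⁻¹ i' j'|)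
          (fun _ _ => Finset.sum_nonneg fun _ _ => abs_nonneg _) (Finset.mem_univ i)
  have hc1nn : 0 ≤ c1 := Finset.sum_nonneg fun _ _ => Finset.sum_nonneg fun _ _ => abs_nonneg _
  have hc2nn : 0 ≤ c2 := Finset.sum_nonneg fun _ _ => Finset.sum_nonneg fun _ _ => abs_nonneg _
  have hA1 : ∀ i j, |(Real.exp ψ.1 • (C.hadamard X) + 1 - Matrix.diagonal x) i j|
      ≤ Real.exp ψ.1 * c1 + 2 := by
    intro i j
    rw [matN_rw]
    simp only [Matrix.add_apply, Matrix.smul_apply, Matrix.hadamard_apply,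
      Matrix.diagonal_apply, smul_eq_mul]
    have h1 : |C i j * X i j| ≤ c1 := by
      rw [abs_mul]
      calc |C i j| * |X i j| ≤ c1 * 1 :=
            mul_le_mul (hc1 i j) (hXb i j) (abs_nonneg _) hc1nn
        _ = c1 := mul_one c1
    have h2 : |(if i = j then 1 - x i else 0 : ℝ)| ≤ 1 := by
      by_cases h : i = j
      · simp only [h, if_true]
        rw [abs_le]
        constructor <;> [linarith [hx1 j]; linarith [hx0 j]]
      · simp [h]
    calc |Real.exp ψ.1 * (C i j * X i j) + (if i = j then 1 - x i else 0 : ℝ)|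
        ≤ |Real.exp ψ.1 * (C i j * X i j)| + |(if i = j then 1 - x i else 0 : ℝ)| :=
          abs_add_le _ _
      _ = Real.exp ψ.1 * |C i j * X i j| + |(if i = j then 1 - x i else 0 : ℝ)| := by
          rw [abs_mul, abs_of_pos (Real.exp_pos _)]
      _ ≤ Real.exp ψ.1 * c1 + 2 := by
          have := mul_le_mul_of_nonneg_left h1 (Real.exp_pos ψ.1).le
          linarith
  have hA2 : ∀ i j, |(Real.exp ψ.2 • ((C⁻¹).hadamard Y) + 1 - Matrix.diagonal y) i j|
      ≤ Real.exp ψ.2 * (4 * c2) + 2 := by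
    intro i j
    rw [matN_rw]
    simp only [Matrix.add_apply, Matrix.smul_apply, Matrix.hadamard_apply,
      Matrix.diagonal_apply, smul_eq_mul]
    have h1 : |C⁻¹ i j * Y i j| ≤ 4 * c2 := by
      rw [abs_mul]
      calc |C⁻¹ i j| * |Y i j| ≤ c2 * 4 :=
            mul_le_mul (hc2 i j) (hYb i j) (abs_nonneg _) hc2nn
        _ = 4 * c2 := by ring
    have h2 : |(if i = j then 1 - y i else 0 : ℝ)| ≤ 1 := by
      by_cases h : i = j
      · simp only [h, if_true]
        rw [abs_le]
        constructor <;> [linarith [hy1 j]; linarith [hy0 j]]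
      · simp [h]
    calc |Real.exp ψ.2 * (C⁻¹ i j * Y i j) + (if i = j then 1 - y i else 0 : ℝ)|
        ≤ |Real.exp ψ.2 * (C⁻¹ i j * Y i j)| + |(if i = j then 1 - y i else 0 : ℝ)| :=
          abs_add_le _ _
      _ = Real.exp ψ.2 * |C⁻¹ i j * Y i j| + |(if i = j then 1 - y i else 0 : ℝ)| := by
          rw [abs_mul, abs_of_pos (Real.exp_pos _)]
      _ ≤ Real.exp ψ.2 * (4 * c2) + 2 := by
          have := mul_le_mul_of_nonneg_left h1 (Real.exp_pos ψ.2).le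
          linarith
  have ld1 := logdet_le (M := Real.exp ψ.1 • (C.hadamard X) + 1 - Matrix.diagonal x)
    (K := Real.exp ψ.1 * c1 + 2) (by positivity) hA1
  have ld2 := logdet_le (M := Real.exp ψ.2 • ((C⁻¹).hadamard Y) + 1 - Matrix.diagonal y)
    (K := Real.exp ψ.2 * (4 * c2) + 2) (by positivity) hA2
  simp only [gobj, Real.log_exp]
  have e1 : (0:ℝ) ≤ 1 - α := by linarith
  apply add_le_add
  · apply mul_le_mul_of_nonneg_left _ e1
    linarith
  · apply mul_le_mul_of_nonneg_left _ hα0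
    linarith

end App

/-- For fixed `α ∈ [0,1]`, the function
`(ψ₁,ψ₂) ↦ v̌(C,s;α,e^{ψ₁},e^{ψ₂})` is jointly convex on `ℝ²`. -/
theorem stmt_17 (n : ℕ) (C : Matrix (Fin n) (Fin n) ℝ) (hC : C.PosDef)
    (s : ℕ) (hs1 : 1 ≤ s) (hs2 : s ≤ n - 1)
    (α : ℝ) (hα : α ∈ Set.Icc (0 : ℝ) 1) :
    ConvexOn ℝ Set.univ
      (fun ψ : ℝ × ℝ => vcheck n C s α (Real.exp ψ.1) (Real.exp ψ.2)) := by
  obtain ⟨hα0, hα1⟩ := hα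
  have hsn : s ≤ n := hs2.trans (Nat.sub_le n 1)
  set Sfam : ℝ × ℝ → Set ℝ := fun ψ => {r : ℝ | ∃ x X, memP n (s : ℝ) x X ∧
    r = gobj n C s α (Real.exp ψ.1) (Real.exp ψ.2) x X ((fun _ => (1 : ℝ)) - x)
      (X + vecMulVec (fun _ => (1 : ℝ)) (fun _ => (1 : ℝ))
        - vecMulVec (fun _ => (1 : ℝ)) x - vecMulVec x (fun _ => (1 : ℝ)))} with hSfam
  have hveq : ∀ ψ : ℝ × ℝ, vcheck n C s α (Real.exp ψ.1) (Real.exp ψ.2) = sSup (Sfam ψ) :=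
    fun _ => rfl
  have hne : ∀ ψ : ℝ × ℝ, (Sfam ψ).Nonempty := by
    intro ψ
    exact ⟨_, ⟨_, _, memP_witness hsn, rfl⟩⟩
  have hbdd : ∀ ψ : ℝ × ℝ, BddAbove (Sfam ψ) := by
    intro ψ
    refine ⟨(1 - α) * (Real.log ((n.factorial : ℝ)
          * (Real.exp ψ.1 * (∑ i, ∑ j, |C i j|) + 2) ^ n + 1) - s * ψ.1)
      + α * (Real.log ((n.factorial : ℝ)
          * (Real.exp ψ.2 * (4 * ∑ i, ∑ j, |C⁻¹ i j|) + 2) ^ n + 1)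
          - ((n : ℝ) - s) * ψ.2 + Real.log C.det), ?_⟩
    rintro r ⟨x, X, hmem, rfl⟩
    obtain ⟨hX, hx0, hx1, hXb, hY, hYb⟩ := memP_props hmem rfl
    refine gobj_le hα0 hα1 hXb hx0 hx1 hYb ?_ ?_ ψ
    · intro i; simp only [Pi.sub_apply]; linarith [hx1 i]
    · intro i; simp only [Pi.sub_apply]; linarith [hx0 i]
  have hconv : ∀ x X, memP n (s : ℝ) x X →
      ConvexOn ℝ Set.univ fun ψ : ℝ × ℝ =>
        gobj n C s α (Real.exp ψ.1) (Real.exp ψ.2) x X ((fun _ => (1 : ℝ)) - x)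
          (X + vecMulVec (fun _ => (1 : ℝ)) (fun _ => (1 : ℝ))
            - vecMulVec (fun _ => (1 : ℝ)) x - vecMulVec x (fun _ => (1 : ℝ))) := by
    intro x X hmem
    obtain ⟨hX, hx0, hx1, hXb, hY, hYb⟩ := memP_props hmem rfl
    refine gconv hα0 hα1 (psd_hadamard hC.posSemidef hX) hx1
      (psd_hadamard hC.inv.posSemidef hY) ?_
    intro i; simp only [Pi.sub_apply]; linarith [hx0 i]
  refine ⟨convex_univ, fun p _ q _ u v hu hv huv => ?_⟩
  simp only [hveq, smul_eq_mul]
  apply csSup_le (hne _)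
  rintro r ⟨x, X, hmem, rfl⟩
  have hcv := (hconv x X hmem).2 (Set.mem_univ p) (Set.mem_univ q) hu hv huv
  simp only [smul_eq_mul] at hcv
  refine le_trans hcv ?_
  have le1 : gobj n C s α (Real.exp p.1) (Real.exp p.2) x X ((fun _ => (1 : ℝ)) - x)
      (X + vecMulVec (fun _ => (1 : ℝ)) (fun _ => (1 : ℝ))
        - vecMulVec (fun _ => (1 : ℝ)) x - vecMulVec x (fun _ => (1 : ℝ)))
      ≤ sSup (Sfam p) := le_csSup (hbdd p) ⟨x, X, hmem, rfl⟩
  have le2 : gobj n C s α (Real.exp q.1) (Real.exp q.2) x X ((fun _ => (1 : ℝ)) - x)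
      (X + vecMulVec (fun _ => (1 : ℝ)) (fun _ => (1 : ℝ))
        - vecMulVec (fun _ => (1 : ℝ)) x - vecMulVec x (fun _ => (1 : ℝ)))
      ≤ sSup (Sfam q) := le_csSup (hbdd q) ⟨x, X, hmem, rfl⟩
  exact add_le_add (mul_le_mul_of_nonneg_left le1 hu) (mul_le_mul_of_nonneg_left le2 hv)
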